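/- Let K ≥ 1 and let v_1, …, v_{K+1} be real-valued random variables on a probability space whose joint distribution is exchangeable. Fix α ∈ (0,1) with ⌈(K+1)(1−α)⌉ ≤ K, and let q̂ be the ⌈(K+1)(1−α)⌉-th order statistic of v_1, …, v_K. Then ℙ(v_{K+1} ≤ q̂) ≥ 1 − α. -/

import Mathlib

open MeasureTheory

open Finset in
/-- If fewer than `m+1` of the `w i` are `< x`, then `x ≤` the `m`-th order statistic. -/
private lemma le_orderStat_aux {K : ℕ} (w : Fin K → ℝ) (x : ℝ) (m : ℕ) (hm : m < K)
    (h : (univ.filter (fun i => w i < x)).card ≤ m) :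
    x ≤ w (Tuple.sort w ⟨m, hm⟩) := by
  by_contra hlt
  push_neg at hlt
  have hinj : Function.Injective (fun k : Fin (m+1) =>
      Tuple.sort w ⟨k, lt_of_le_of_lt (Nat.lt_succ_iff.mp k.2) hm⟩) := by
    intro a b hab
    have h1 := (Tuple.sort w).injective hab
    exact Fin.ext (by simpa using congrArg Fin.val h1)
  have hmem : ∀ k : Fin (m+1),
      Tuple.sort w ⟨k, lt_of_le_of_lt (Nat.lt_succ_iff.mp k.2) hm⟩ ∈
        univ.filter (fun i => w i < x) := by
    intro k
    simp only [mem_filter, mem_univ, true_and]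
    have hmono := Tuple.monotone_sort w
    have h2 : w (Tuple.sort w ⟨k, lt_of_le_of_lt (Nat.lt_succ_iff.mp k.2) hm⟩)
        ≤ w (Tuple.sort w ⟨m, hm⟩) :=
      hmono (Fin.mk_le_mk.mpr (Nat.lt_succ_iff.mp k.2))
    exact lt_of_le_of_lt h2 hlt
  have hcard := Finset.card_le_card_of_injOn (s := univ) _ (fun k _ => hmem k) hinj.injOn
  simp only [Finset.card_univ, Fintype.card_fin] at hcard
  omega

open Finset in
/-- At least `m+1` of the indices `j` have rank (number of strictly smaller values) `≤ m`. -/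
private lemma rank_count_aux {n : ℕ} (u : Fin n → ℝ) (m : ℕ) (h : m + 1 ≤ n) :
    m + 1 ≤ (univ.filter (fun j => (univ.filter (fun i => u i < u j)).card ≤ m)).card := by
  set σ := Tuple.sort u with hσ
  have hmono := Tuple.monotone_sort u
  have hinj : Function.Injective (fun k : Fin (m+1) => σ ⟨k, lt_of_lt_of_le k.2 h⟩) := by
    intro a b hab
    have h1 := σ.injective hab
    exact Fin.ext (by simpa using congrArg Fin.val h1)
  have hmem : ∀ k : Fin (m+1), σ ⟨k, lt_of_lt_of_le k.2 h⟩ ∈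
      univ.filter (fun j => (univ.filter (fun i => u i < u j)).card ≤ m) := by
    intro k
    simp only [mem_filter, mem_univ, true_and]
    have hsub : univ.filter (fun i => u i < u (σ ⟨k, lt_of_lt_of_le k.2 h⟩)) ⊆
        (Finset.Iio (⟨k, lt_of_lt_of_le k.2 h⟩ : Fin n)).image σ := by
      intro i hi
      simp only [mem_filter, mem_univ, true_and] at hi
      rw [Finset.mem_image]
      refine ⟨σ.symm i, ?_, by simp⟩
      rw [Finset.mem_Iio]
      by_contra hge
      push_neg at hge
      have h2 : u (σ ⟨k, lt_of_lt_of_le k.2 h⟩) ≤ u (σ (σ.symm i)) := hmono hge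
      simp only [Equiv.apply_symm_apply] at h2
      exact absurd hi (not_lt.mpr h2)
    calc (univ.filter (fun i => u i < u (σ ⟨k, lt_of_lt_of_le k.2 h⟩))).card
        ≤ ((Finset.Iio (⟨k, lt_of_lt_of_le k.2 h⟩ : Fin n)).image σ).card :=
          Finset.card_le_card hsub
      _ ≤ (Finset.Iio (⟨k, lt_of_lt_of_le k.2 h⟩ : Fin n)).card := Finset.card_image_le
      _ ≤ m := by rw [Fin.card_Iio]; exact Nat.lt_succ_iff.mp k.2
  have hcard := Finset.card_le_card_of_injOn (s := univ) _ (fun k _ => hmem k) hinj.injOn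
  simpa using hcard

/-- The `t`-th smallest value (0-indexed) among `w 0, …, w (K-1)`. -/
noncomputable def orderStat {K : ℕ} (w : Fin K → ℝ) (t : Fin K) : ℝ :=
  w (Tuple.sort w t)

/-- Split conformal coverage guarantee: if the scores `v 0, …, v K` (i.e. `v_1, …, v_{K+1}`)
are exchangeable, `α ∈ (0,1)` and `⌈(K+1)(1−α)⌉ ≤ K`, and `q̂` is the
`⌈(K+1)(1−α)⌉`-th order statistic of the first `K` scores, then
`ℙ(v_{K+1} ≤ q̂) ≥ 1 − α`. -/
theorem conformal_coverage
    {Ω : Type*} [MeasurableSpace Ω] (μ : Measure Ω) [IsProbabilityMeasure μ]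
    (K : ℕ) (hK : 1 ≤ K)
    (v : Fin (K + 1) → Ω → ℝ) (hmeas : ∀ i, Measurable (v i))
    (hexch : ∀ σ : Equiv.Perm (Fin (K + 1)),
      Measure.map (fun ω (i : Fin (K + 1)) => v (σ i) ω) μ
        = Measure.map (fun ω (i : Fin (K + 1)) => v i ω) μ)
    (α : ℝ) (hα : α ∈ Set.Ioo (0 : ℝ) 1)
    (hceil : ⌈((K : ℝ) + 1) * (1 - α)⌉₊ ≤ K) :
    1 - α ≤
      (μ {ω | v (Fin.last K) ω ≤
        orderStat (fun i : Fin K => v i.castSucc ω)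
          ⟨⌈((K : ℝ) + 1) * (1 - α)⌉₊ - 1, by omega⟩}).toReal := by
  classical
  open Finset in
  set t : ℕ := ⌈((K : ℝ) + 1) * (1 - α)⌉₊ with ht
  have ht1 : 1 ≤ t := by
    rw [ht, Nat.one_le_iff_ne_zero, ← Nat.pos_iff_ne_zero, Nat.ceil_pos]
    have h0 : (0:ℝ) < (K:ℝ) + 1 := by positivity
    nlinarith [hα.2]
  set m : ℕ := t - 1 with hm
  have hmt : m + 1 = t := by omega
  have hmK : m < K := by omega
  set cnt : Fin (K+1) → (Fin (K+1) → ℝ) → ℕ :=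
    fun j u => (univ.filter (fun i => u i < u j)).card with hcnt
  have hcntmeas : ∀ j, Measurable (cnt j) := by
    intro j
    have h1 : cnt j = fun u => ∑ i, if u i < u j then 1 else 0 := by
      funext u; exact Finset.card_filter _ _
    rw [h1]
    exact Finset.measurable_sum _ (fun i _ => Measurable.ite
      (measurableSet_lt (measurable_pi_apply i) (measurable_pi_apply j))
      measurable_const measurable_const)
  set S : Fin (K+1) → Set (Fin (K+1) → ℝ) := fun j => {u | cnt j u ≤ m} with hS
  have hSmeas : ∀ j, MeasurableSet (S j) :=
    fun j => (hcntmeas j) (measurableSet_le measurable_id measurable_const)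
  set V : Ω → (Fin (K+1) → ℝ) := fun ω i => v i ω with hV
  have hVmeas : Measurable V := measurable_pi_lambda _ (fun i => hmeas i)
  set E : Fin (K+1) → Set Ω := fun j => V ⁻¹' S j with hE
  have hEmeas : ∀ j, MeasurableSet (E j) := fun j => hVmeas (hSmeas j)
  -- exchangeability: all events `E j` have the same probability
  have hEeq : ∀ j, μ (E j) = μ (E (Fin.last K)) := by
    intro j
    set σ := Equiv.swap j (Fin.last K) with hσ
    set P : (Fin (K+1) → ℝ) → (Fin (K+1) → ℝ) := fun u i => u (σ i) with hP
    have hPmeas : Measurable P := measurable_pi_lambda _ (fun i => measurable_pi_apply (σ i))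
    have hSpre : S j = P ⁻¹' (S (Fin.last K)) := by
      ext u
      simp only [hS, hP, Set.mem_setOf_eq, Set.mem_preimage]
      have hc : cnt (Fin.last K) (fun i => u (σ i)) = cnt j u := by
        simp only [hcnt]
        have hσl : σ (Fin.last K) = j := Equiv.swap_apply_right _ _
        simp only [hσl]
        apply Finset.card_bij (fun i _ => σ i)
        · intro i hi; simp only [mem_filter, mem_univ, true_and] at hi ⊢; exact hi
        · intro a _ b _ hab; exact σ.injective hab
        · intro b hb
          refine ⟨σ.symm b, ?_, by simp⟩
          simp only [mem_filter, mem_univ, true_and] at hb ⊢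
          simpa using hb
      rw [hc]
    have hcomp : P ∘ V = fun ω i => v (σ i) ω := rfl
    calc μ (E j) = Measure.map V μ (S j) := (Measure.map_apply hVmeas (hSmeas j)).symm
      _ = Measure.map V μ (P ⁻¹' S (Fin.last K)) := by rw [hSpre]
      _ = Measure.map P (Measure.map V μ) (S (Fin.last K)) :=
          (Measure.map_apply hPmeas (hSmeas (Fin.last K))).symm
      _ = Measure.map (P ∘ V) μ (S (Fin.last K)) := by
          rw [Measure.map_map hPmeas hVmeas]
      _ = Measure.map V μ (S (Fin.last K)) := by rw [hcomp, hexch σ]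
      _ = μ (E (Fin.last K)) := Measure.map_apply hVmeas (hSmeas (Fin.last K))
  -- counting bound: the sum of the probabilities is at least `t`
  have hsum : (t : ENNReal) ≤ ∑ j, μ (E j) := by
    have hpt : ∀ ω, (t : ENNReal) ≤ ∑ j, (E j).indicator (fun _ => (1:ENNReal)) ω := by
      intro ω
      have hrk := rank_count_aux (fun i => v i ω) m (by omega)
      have hci : ∑ j, (E j).indicator (fun _ => (1:ENNReal)) ω
          = ((univ.filter (fun j => ω ∈ E j)).card : ENNReal) := by
        rw [Finset.card_filter]
        push_cast
        apply Finset.sum_congr rfl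
        intro j _
        by_cases hj : ω ∈ E j <;> simp [Set.indicator, hj]
      rw [hci]
      have hfe : (univ.filter (fun j => ω ∈ E j))
          = univ.filter (fun j => (univ.filter (fun i => v i ω < v j ω)).card ≤ m) := by
        apply Finset.filter_congr
        intro j _
        simp only [hE, hS, hcnt, Set.mem_preimage, Set.mem_setOf_eq, hV]
      rw [hfe]
      exact_mod_cast le_trans (by exact_mod_cast hmt.ge) (Nat.cast_le.mpr hrk)
    calc (t : ENNReal) = ∫⁻ _, (t : ENNReal) ∂μ := by simp
      _ ≤ ∫⁻ ω, ∑ j, (E j).indicator (fun _ => (1:ENNReal)) ω ∂μ := lintegral_mono hpt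
      _ = ∑ j, ∫⁻ ω, (E j).indicator (fun _ => (1:ENNReal)) ω ∂μ :=
          lintegral_finset_sum _ (fun j _ => (measurable_const.indicator (hEmeas j)))
      _ = ∑ j, μ (E j) := by
          apply Finset.sum_congr rfl
          intro j _
          exact lintegral_indicator_one (hEmeas j)
  have hsum2 : ∑ j, μ (E j) = ((K:ENNReal) + 1) * μ (E (Fin.last K)) := by
    rw [Finset.sum_congr rfl (fun j _ => hEeq j)]
    simp [Finset.card_univ, mul_comm, mul_add, add_mul]
  have hle : (t : ENNReal) / ((K:ENNReal) + 1) ≤ μ (E (Fin.last K)) := by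
    rw [ENNReal.div_le_iff (by simp)
      (ENNReal.add_ne_top.mpr ⟨ENNReal.natCast_ne_top K, ENNReal.one_ne_top⟩)]
    rw [mul_comm, ← hsum2]
    exact hsum
  -- the coverage event contains `E (Fin.last K)`
  set T : Set Ω := {ω | v (Fin.last K) ω ≤
      orderStat (fun i : Fin K => v i.castSucc ω) ⟨t - 1, by omega⟩} with hT
  have hsubset : E (Fin.last K) ⊆ T := by
    intro ω hω
    simp only [hE, hS, hcnt, hV, Set.mem_preimage, Set.mem_setOf_eq] at hω
    have hcount : (univ.filter (fun i : Fin K => v i.castSucc ω < v (Fin.last K) ω)).card ≤ m := by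
      refine le_trans ?_ hω
      apply Finset.card_le_card_of_injOn (fun i => i.castSucc)
      · intro i hi
        simp only [Finset.mem_coe, mem_filter, mem_univ, true_and] at hi ⊢
        exact hi
      · exact fun a _ b _ hab => Fin.castSucc_injective K hab
    have := le_orderStat_aux (fun i : Fin K => v i.castSucc ω) (v (Fin.last K) ω) m hmK hcount
    simpa only [hT, Set.mem_setOf_eq, orderStat, hm] using this
  have hTle : (t : ENNReal) / ((K:ENNReal) + 1) ≤ μ T :=
    le_trans hle (measure_mono hsubset)
  -- conclude
  have hfin : μ T ≠ ⊤ := measure_ne_top μ T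
  have h1 : ((t : ENNReal) / ((K:ENNReal) + 1)).toReal ≤ (μ T).toReal :=
    ENNReal.toReal_mono hfin hTle
  have h2 : ((t : ENNReal) / ((K:ENNReal) + 1)).toReal = (t : ℝ) / ((K:ℝ) + 1) := by
    rw [ENNReal.toReal_div]
    rw [ENNReal.toReal_add (by simp) (by simp), ENNReal.toReal_natCast, ENNReal.toReal_one,
      ENNReal.toReal_natCast]
  have h3 : 1 - α ≤ (t : ℝ) / ((K:ℝ) + 1) := by
    have hc := Nat.le_ceil (((K : ℝ) + 1) * (1 - α))
    rw [← ht] at hc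
    have hKpos : (0:ℝ) < (K:ℝ) + 1 := by positivity
    rw [le_div_iff₀ hKpos]
    nlinarith
  calc 1 - α ≤ (t : ℝ) / ((K:ℝ) + 1) := h3
    _ = ((t : ENNReal) / ((K:ENNReal) + 1)).toReal := h2.symm
    _ ≤ (μ T).toReal := h1
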